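/- Consider a rank-one symbolic recursion B_{n+1} = (B_n s^a)^{m_n} B_n with m_n ≥ 1 for all n ≥ N. Then for every n ≥ N, the word B_{n+1} is a prefix of the periodic infinite sequence (B_N s^a)^∞, i.e., the one-sided infinite word obtained as the limit of the B_n is periodic with period block B_N s^a. -/
import Mathlib


/-- The two-letter alphabet `{0, s}` used in rank-one constructions. -/
inductive BVSym : Type
  | zero : BVSym
  | sp : BVSym
  deriving DecidableEq, Inhabited

/-- `wpow w i` is the `i`-fold concatenation of the word `w` with itself. -/
def wpow (w : List BVSym) (i : ℕ) : List BVSym := (List.replicate i w).flatten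

lemma wpow_add (w : List BVSym) (i j : ℕ) :
    wpow w (i + j) = wpow w i ++ wpow w j := by
  unfold wpow
  rw [List.replicate_add, List.flatten_append]

lemma wpow_one (w : List BVSym) : wpow w 1 = w := by simp [wpow]

lemma wpow_wpow (w : List BVSym) (c k : ℕ) :
    wpow (wpow w c) k = wpow w (c * k) := by
  induction k with
  | zero => simp [wpow]
  | succ k ih =>
    have h1 : wpow (wpow w c) (k + 1) = wpow (wpow w c) k ++ wpow w c := by
      rw [wpow_add, wpow_one]
    rw [h1, ih, ← wpow_add, Nat.mul_succ]

/-- For the recursion `B_{n+1} = (B_n s^a)^{m_n} B_n` with all `m_n ≥ 1`, every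
`B_{n+1}` (for `n ≥ N`) is a prefix of the periodic infinite word `(B_N s^a)^∞`. -/
theorem rank_one_recursion_periodic (B : ℕ → List BVSym) (N : ℕ)
    (hBN : B N ≠ []) (a : ℕ) (m : ℕ → ℕ)
    (hm : ∀ n ≥ N, 1 ≤ m n)
    (hrec : ∀ n ≥ N,
      B (n + 1) = wpow (B n ++ List.replicate a BVSym.sp) (m n) ++ B n) :
    ∀ n ≥ N, ∃ k, B (n + 1) <+: wpow (B N ++ List.replicate a BVSym.sp) k := by
  set P := B N ++ List.replicate a BVSym.sp with hP
  have key : ∀ n ≥ N, ∃ c, B n ++ List.replicate a BVSym.sp = wpow P c := by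
    intro n hn
    induction n with
    | zero =>
      have hN : N = 0 := Nat.le_zero.mp hn
      exact ⟨1, by rw [wpow_one, hP, hN]⟩
    | succ n ih =>
      rcases Nat.lt_or_ge N (n + 1) with h | h
      · have hn' : n ≥ N := Nat.lt_succ_iff.mp h
        obtain ⟨c, hc⟩ := ih hn'
        refine ⟨c * (m n) + c, ?_⟩
        rw [hrec n hn', hc, List.append_assoc, hc, wpow_add, ← wpow_wpow, ← hc]
      · have : N = n + 1 := le_antisymm hn h
        exact ⟨1, by rw [wpow_one, ← this]⟩
  intro n hn
  obtain ⟨c, hc⟩ := key (n + 1) (by omega)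
  exact ⟨c, List.replicate a BVSym.sp, hc⟩
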